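/- Let (G, δ) be a scalable group endowed with a compatible pseudodistance d, and suppose that for every y ∈ G the right translation R_y(z) = zy is continuous at the identity e. Then the set Z(d) := {x ∈ G : d(x, e) = 0} is a normal subgroup of G which is invariant under all dilations, i.e., δ_λ(Z(d)) ⊆ Z(d) for every λ ∈ ℝ. -/

import Mathlib

theorem stmt8 {G : Type*} [Group G] [PseudoMetricSpace G]
    (δ : ℝ → G → G)
    (hmul : ∀ (l : ℝ) (x y : G), δ l (x * y) = δ l x * δ l y)
    (h0 : ∀ x : G, δ 0 x = 1)
    (hcomp : ∀ (l m : ℝ) (x : G), δ l (δ m x) = δ (l * m) x)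
    (hbij : ∀ l : ℝ, l ≠ 0 → Function.Bijective (δ l))
    (hleft : ∀ x y z : G, dist (x * y) (x * z) = dist y z)
    (hdil : ∀ (l : ℝ) (x y : G), dist (δ l x) (δ l y) = |l| * dist x y)
    (hR : ∀ y : G, ContinuousAt (fun z : G => z * y) (1 : G)) :
    ∃ H : Subgroup G, H.Normal ∧ (H : Set G) = {x : G | dist x (1 : G) = 0} ∧
      ∀ (l : ℝ), ∀ x ∈ H, δ l x ∈ H := by
  -- δ l 1 = 1
  have hone : ∀ l : ℝ, δ l 1 = 1 := by
    intro l
    have := hmul l 1 1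
    rw [one_mul] at this
    exact (left_eq_mul.mp this)
  -- key: if dist x 1 = 0 then dist (x * y) y = 0
  have hRzero : ∀ x y : G, dist x 1 = 0 → dist (x * y) y = 0 := by
    intro x y hx
    have hnn : 0 ≤ dist (x * y) y := dist_nonneg
    rcases lt_or_eq_of_le hnn with hpos | heq
    · exfalso
      obtain ⟨d', hd', hball⟩ := (Metric.continuousAt_iff.mp (hR y)) _ hpos
      have := hball (show dist x 1 < d' by rw [hx]; exact hd')
      simp only [one_mul] at this
      exact lt_irrefl _ this
    · exact heq.symm
  refine ⟨{
    carrier := {x : G | dist x (1 : G) = 0},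
    one_mem' := by simp,
    mul_mem' := by
      intro a b ha hb
      simp only [Set.mem_setOf_eq] at *
      have h1 : dist (a * b) a = dist b 1 := by
        have := hleft a b 1
        simpa using this
      have := dist_triangle (a * b) a 1
      have hle : dist (a * b) 1 ≤ 0 := by
        rw [h1, ha, hb] at this; linarith
      exact le_antisymm hle dist_nonneg,
    inv_mem' := by
      intro a ha
      simp only [Set.mem_setOf_eq] at *
      have := hleft a⁻¹ 1 a
      simp only [mul_one, inv_mul_cancel] at this
      rw [this, dist_comm, ha] }, ?_, rfl, ?_⟩
  · constructor
    intro n hn g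
    simp only [Subgroup.mem_mk, Set.mem_setOf_eq] at *
    have h1 : dist (g * n * g⁻¹) 1 = dist (n * g⁻¹) g⁻¹ := by
      have := hleft g (n * g⁻¹) g⁻¹
      simpa [mul_assoc] using this
    change dist (g * n * g⁻¹) 1 = 0
    rw [h1]
    exact hRzero n g⁻¹ hn
  · intro l x hx
    simp only [Subgroup.mem_mk, Set.mem_setOf_eq] at *
    have := hdil l x 1
    rw [hone l] at this
    change dist x 1 = 0 at hx
    change dist (δ l x) 1 = 0
    rw [this, hx, mul_zero]
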